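/- Let X be a finite closure space and W ⊆ X. Then W is open if and only if there exists A ⊆ X such that W = { x ∈ X | ∃ M ∈ 𝓜(x), M ⊆ A }. (Equivalently, W is open iff W = π([A]) for some A ⊆ X, where [A] = {(y,N) ∈ Top X | N ⊆ A} and π(y,N) = y.) -/

import Mathlib

/-- The set of neighborhoods of a point `x` in a closure space with closure operator `c`:
`U` is a neighborhood of `x` if `x ∉ c (X \ U)`. -/
def nbhd {X : Type*} (c : Set X → Set X) (x : X) : Set (Set X) := {U | x ∉ c Uᶜ}

/-- The set `𝓜(x)` of minimal neighborhoods of `x` (minimal elements of `nbhd c x`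
under inclusion). -/
def minNbhd {X : Type*} (c : Set X → Set X) (x : X) : Set (Set X) :=
  {M | M ∈ nbhd c x ∧ ∀ U ∈ nbhd c x, U ⊆ M → U = M}

/-- A subset `U` is open in the closure space if its complement is closed. -/
def isOpenCS {X : Type*} (c : Set X → Set X) (U : Set X) : Prop := c Uᶜ = Uᶜ

/-- `A` converges to `x` if `A` is contained in some minimal neighborhood of `x`. -/
def conv {X : Type*} (c : Set X → Set X) (A : Set X) (x : X) : Prop :=
  ∃ M ∈ minNbhd c x, A ⊆ M

lemma mem_of_nbhd {X : Type*} (c : Set X → Set X) (hc1 : ∀ A : Set X, A ⊆ c A)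
    {x : X} {U : Set X} (hU : U ∈ nbhd c x) : x ∈ U := by
  by_contra hx
  exact hU (hc1 Uᶜ hx)

lemma exists_minNbhd {X : Type*} [Fintype X] (c : Set X → Set X)
    {x : X} {U : Set X} (hU : U ∈ nbhd c x) : ∃ M ∈ minNbhd c x, M ⊆ U := by
  classical
  set s : Set (Set X) := {V | V ∈ nbhd c x ∧ V ⊆ U} with hs
  obtain ⟨M, hMs, hmin⟩ := Set.Finite.exists_minimalFor id s (Set.toFinite s)
    ⟨U, hU, le_refl U⟩
  refine ⟨M, ⟨hMs.1, fun V hV hVM => ?_⟩, hMs.2⟩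
  exact Set.Subset.antisymm hVM (hmin ⟨hV, hVM.trans hMs.2⟩ hVM)

lemma minNbhd_nbhd_of_mem {X : Type*} (c : Set X → Set X)
    (hc1 : ∀ A : Set X, A ⊆ c A)
    (hc2 : ∀ A B : Set X, A ⊆ B → c A ⊆ c B)
    (hc3 : ∀ A : Set X, c (c A) = c A)
    {x y : X} {M : Set X} (hM : M ∈ minNbhd c x) (hy : y ∈ M) : M ∈ nbhd c y := by
  by_contra hyc
  simp only [nbhd, Set.mem_setOf_eq, not_not] at hyc
  have hsub : (M \ {y})ᶜ ⊆ c Mᶜ := by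
    rw [Set.diff_eq, Set.compl_inter, compl_compl]
    rintro z (hz | hz)
    · exact hc1 Mᶜ hz
    · rw [Set.mem_singleton_iff] at hz; subst hz; exact hyc
  have hM' : (M \ {y}) ∈ nbhd c x := by
    intro hx
    exact hM.1 ((hc3 Mᶜ ▸ hc2 _ _ hsub) hx)
  have := hM.2 _ hM' (Set.diff_subset)
  rw [← this] at hy
  exact hy.2 rfl

/-- `W` is open iff it is of the form `{x | ∃ M ∈ 𝓜(x), M ⊆ A}` for some `A`. -/
theorem stmt_13 {X : Type*} [Fintype X] (c : Set X → Set X)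
    (hc1 : ∀ A : Set X, A ⊆ c A)
    (hc2 : ∀ A B : Set X, A ⊆ B → c A ⊆ c B)
    (hc3 : ∀ A : Set X, c (c A) = c A)
    (W : Set X) :
    isOpenCS c W ↔ ∃ A : Set X, W = {x : X | ∃ M ∈ minNbhd c x, M ⊆ A} := by
  constructor
  · intro hW
    refine ⟨W, Set.ext fun x => ⟨fun hx => ?_, fun ⟨M, hM, hMW⟩ => ?_⟩⟩
    · have hWn : W ∈ nbhd c x := by
        rw [isOpenCS] at hW
        show x ∉ c Wᶜ
        rw [hW]
        exact fun h => h hx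
      exact exists_minNbhd c hWn
    · exact hMW (mem_of_nbhd c hc1 hM.1)
  · rintro ⟨A, rfl⟩
    have key : ∀ x ∈ {x : X | ∃ M ∈ minNbhd c x, M ⊆ A},
        x ∉ c {x : X | ∃ M ∈ minNbhd c x, M ⊆ A}ᶜ := by
      rintro x ⟨M, hM, hMA⟩ hx
      have hMsub : M ⊆ {x : X | ∃ M ∈ minNbhd c x, M ⊆ A} := by
        intro y hy
        obtain ⟨N, hN, hNM⟩ :=
          exists_minNbhd c (minNbhd_nbhd_of_mem c hc1 hc2 hc3 hM hy)
        exact ⟨N, hN, hNM.trans hMA⟩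
      exact hM.1 (hc2 _ _ (Set.compl_subset_compl.mpr hMsub) hx)
    apply Set.Subset.antisymm
    · intro x hx
      by_contra hxW
      simp only [Set.mem_compl_iff, Set.mem_setOf_eq, not_not] at hxW
      exact key x hxW hx
    · exact hc1 _
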